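/- The Arens–Eells seminorm ‖·‖_d on molecules of a pseudometric space (M,d) is a norm if and only if d is a metric. -/

import Mathlib

noncomputable section

/-- The space of molecules of `M`: finitely supported real functions summing to zero. -/
def Mol (M : Type*) : Submodule ℝ (M →₀ ℝ) :=
  LinearMap.ker (Finsupp.lsum ℝ (fun _ : M => (LinearMap.id : ℝ →ₗ[ℝ] ℝ)))

/-- The elementary molecule `χ_x - χ_y`. -/
def mol {M : Type*} (x y : M) : Mol M :=
  ⟨Finsupp.single x 1 - Finsupp.single y 1, by
    classical
    simp [Mol, LinearMap.mem_ker, Finsupp.sum_sub_index, Finsupp.sum_single_index]⟩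

/-- The Arens–Eells (Kantorovich–Rubinstein) seminorm on molecules:
`‖m‖ = inf { Σ |cᵢ| d(xᵢ,yᵢ) : m = Σ cᵢ (χ_{xᵢ} - χ_{yᵢ}) }`. -/
def aeNorm {M : Type*} [PseudoMetricSpace M] (m : Mol M) : ℝ :=
  sInf {s : ℝ | ∃ (n : ℕ) (c : Fin n → ℝ) (x y : Fin n → M),
    (m : M →₀ ℝ) = ∑ i, c i • (Finsupp.single (x i) 1 - Finsupp.single (y i) 1) ∧
    s = ∑ i, |c i| * dist (x i) (y i)}

/-- Every molecule has a `Fin`-indexed representation. -/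
lemma mol_repr {M : Type*} (m : Mol M) (p : M) :
    ∃ (n : ℕ) (c : Fin n → ℝ) (x : Fin n → M),
      (m : M →₀ ℝ) = ∑ i, c i • (Finsupp.single (x i) 1 - Finsupp.single p 1) := by
  classical
  set s := (m : M →₀ ℝ).support with hs
  refine ⟨s.card, fun i => (m : M →₀ ℝ) (s.equivFin.symm i), fun i => (s.equivFin.symm i : M), ?_⟩
  have hsum : ∑ z ∈ s, (m : M →₀ ℝ) z = 0 := by
    have h := m.2
    simp only [Mol, LinearMap.mem_ker, Finsupp.lsum_apply] at h
    simpa [Finsupp.sum] using h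
  have key : (m : M →₀ ℝ) = ∑ z ∈ s, (m : M →₀ ℝ) z • (Finsupp.single z 1 - Finsupp.single p 1) := by
    rw [Finset.sum_congr rfl (fun z _ => smul_sub ((m : M →₀ ℝ) z) _ _), Finset.sum_sub_distrib,
      ← Finset.sum_smul, hsum, zero_smul, sub_zero]
    conv_lhs => rw [← Finsupp.sum_single (m : M →₀ ℝ)]
    simp [Finsupp.sum, Finsupp.smul_single, hs]
  calc (m : M →₀ ℝ) = ∑ z ∈ s, (m : M →₀ ℝ) z • (Finsupp.single z 1 - Finsupp.single p 1) := key
    _ = ∑ z ∈ s.attach, (m : M →₀ ℝ) z.1 • ((Finsupp.single z.1 1 : M →₀ ℝ) - Finsupp.single p 1) :=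
      (Finset.sum_attach s fun z => (m : M →₀ ℝ) z • ((Finsupp.single z 1 : M →₀ ℝ) - Finsupp.single p 1)).symm
    _ = ∑ i : Fin s.card, (m : M →₀ ℝ) (s.equivFin.symm i) •
        ((Finsupp.single ((s.equivFin.symm i : M)) 1 : M →₀ ℝ) - Finsupp.single p 1) :=
      Fintype.sum_equiv s.equivFin _ _ (fun z => by rw [Equiv.symm_apply_apply])

/-- For a pseudometric space `(M,d)`, the Arens–Eells seminorm on the
space of molecules is a norm (i.e. definite) if and only if `d` is a metric. -/
theorem aeNorm_norm_iff_metric {M : Type*} [PseudoMetricSpace M] :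
    (∀ m : Mol M, aeNorm m = 0 → m = 0) ↔ (∀ x y : M, dist x y = 0 → x = y) := by
  classical
  constructor
  · -- definite → metric
    intro h x y hxy
    have hnonneg : ∀ s ∈ {s : ℝ | ∃ (n : ℕ) (c : Fin n → ℝ) (a b : Fin n → M),
        ((mol x y : Mol M) : M →₀ ℝ) = ∑ i, c i • (Finsupp.single (a i) 1 - Finsupp.single (b i) 1) ∧
        s = ∑ i, |c i| * dist (a i) (b i)}, 0 ≤ s := by
      rintro s ⟨n, c, a, b, -, rfl⟩
      exact Finset.sum_nonneg fun i _ => mul_nonneg (abs_nonneg _) dist_nonneg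
    have hmem : (0 : ℝ) ∈ {s : ℝ | ∃ (n : ℕ) (c : Fin n → ℝ) (a b : Fin n → M),
        ((mol x y : Mol M) : M →₀ ℝ) = ∑ i, c i • (Finsupp.single (a i) 1 - Finsupp.single (b i) 1) ∧
        s = ∑ i, |c i| * dist (a i) (b i)} := by
      exact ⟨1, fun _ => 1, fun _ => x, fun _ => y, by simp [mol], by simp [hxy]⟩
    have h0 : aeNorm (mol x y) = 0 := le_antisymm (csInf_le ⟨0, hnonneg⟩ hmem) (Real.sInf_nonneg hnonneg)
    have hm := h _ h0
    have hm' : (Finsupp.single x 1 - Finsupp.single y 1 : M →₀ ℝ) = 0 := by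
      have := congrArg (Subtype.val) hm
      simpa [mol] using this
    by_contra hne
    have := congrFun (congrArg (⇑) hm') x
    simp [Finsupp.single_apply, Ne.symm hne] at this
  · -- metric → definite
    intro hd m hm
    by_contra hm0
    have hsupp : ((m : M →₀ ℝ).support).Nonempty := by
      rw [Finsupp.support_nonempty_iff]
      intro h0
      exact hm0 (Subtype.ext h0)
    obtain ⟨p, hp⟩ := hsupp
    set s := (m : M →₀ ℝ).support with hsdef
    set T := s.erase p with hT
    -- choose ε > 0 below all distances from other support points to p
    set ε : ℝ := if hTe : T.Nonempty then T.inf' hTe (fun z => dist z p) else 1 with hε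
    have hεpos : 0 < ε := by
      rw [hε]
      split_ifs with hTe
      · apply (Finset.lt_inf'_iff hTe).2
        intro z hz
        have hzp : z ≠ p := Finset.ne_of_mem_erase hz
        have : dist z p ≠ 0 := fun h0 => hzp (hd z p h0)
        exact lt_of_le_of_ne dist_nonneg (Ne.symm this)
      · norm_num
    have hεle : ∀ z ∈ T, ε ≤ dist z p := by
      intro z hz
      rw [hε]
      rw [dif_pos ⟨z, hz⟩]
      exact Finset.inf'_le _ hz
    -- the test function
    set f : M → ℝ := fun z => max (ε - dist z p) 0 with hf
    have hfp : f p = ε := by simp [hf, le_of_lt hεpos]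
    have hfz : ∀ z ∈ T, f z = 0 := by
      intro z hz
      have := hεle z hz
      simp [hf, max_eq_right, sub_nonpos.2 this]
    have hlip : ∀ a b : M, |f a - f b| ≤ dist a b := by
      intro a b
      calc |f a - f b| ≤ |(ε - dist a p) - (ε - dist b p)| := abs_max_sub_max_le_abs _ _ _
        _ = |dist b p - dist a p| := by ring_nf
        _ ≤ dist b a := abs_dist_sub_le _ _ _
        _ = dist a b := dist_comm b a
    -- the pairing functional
    set F : (M →₀ ℝ) →ₗ[ℝ] ℝ := Finsupp.linearCombination ℝ f with hF
    have hFm : F (m : M →₀ ℝ) = (m : M →₀ ℝ) p * ε := by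
      rw [hF, Finsupp.linearCombination_apply, Finsupp.sum]
      rw [Finset.sum_eq_single_of_mem p hp]
      · rw [hfp, smul_eq_mul]
      · intro z hz hzp
        rw [hfz z (Finset.mem_erase.2 ⟨hzp, hz⟩), smul_zero]
    have hFmpos : 0 < |F (m : M →₀ ℝ)| := by
      rw [hFm, abs_mul, abs_of_pos hεpos]
      exact mul_pos (abs_pos.2 (Finsupp.mem_support_iff.1 hp)) hεpos
    -- lower bound for all representations
    have hlb : ∀ x ∈ {s : ℝ | ∃ (n : ℕ) (c : Fin n → ℝ) (a b : Fin n → M),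
        (m : M →₀ ℝ) = ∑ i, c i • (Finsupp.single (a i) 1 - Finsupp.single (b i) 1) ∧
        x = ∑ i, |c i| * dist (a i) (b i)}, |F (m : M →₀ ℝ)| ≤ x := by
      rintro x ⟨n, c, a, b, hrep, rfl⟩
      have hFval : F (m : M →₀ ℝ) = ∑ i, c i * (f (a i) - f (b i)) := by
        rw [hrep, map_sum]
        congr 1
        funext i
        rw [map_smul, map_sub, hF, Finsupp.linearCombination_single]
        simp [smul_eq_mul, mul_sub]
      rw [hFval]
      calc |∑ i, c i * (f (a i) - f (b i))| ≤ ∑ i, |c i * (f (a i) - f (b i))| :=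
            Finset.abs_sum_le_sum_abs _ _
        _ ≤ ∑ i, |c i| * dist (a i) (b i) := by
            apply Finset.sum_le_sum
            intro i _
            rw [abs_mul]
            exact mul_le_mul_of_nonneg_left (hlip _ _) (abs_nonneg _)
    -- the set is nonempty
    obtain ⟨n, c, xx, hrep⟩ := mol_repr m p
    have hne : Set.Nonempty {s : ℝ | ∃ (n : ℕ) (c : Fin n → ℝ) (a b : Fin n → M),
        (m : M →₀ ℝ) = ∑ i, c i • (Finsupp.single (a i) 1 - Finsupp.single (b i) 1) ∧
        s = ∑ i, |c i| * dist (a i) (b i)} :=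
      ⟨∑ i, |c i| * dist (xx i) p, n, c, xx, fun _ => p, hrep, rfl⟩
    have : |F (m : M →₀ ℝ)| ≤ aeNorm m := le_csInf hne hlb
    rw [hm] at this
    exact absurd (lt_of_lt_of_le hFmpos this) (lt_irrefl 0)
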